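/- arXiv:1007.3001 — 3 statements merged into one kernel-verified Lean document; each statement's English description precedes it below -/
import Mathlib

section
/- Let H be a complex Hilbert space, let A : [0, ∞) → B(H) assign to each t a bounded linear operator on H, let F : [0, ∞) × H → H, and let u : [0, ∞) → H be differentiable with u̇(t) = A(t) u(t) + F(t, u(t)) for all t ≥ 0. Assume: Re⟨A(t) w, w⟩ ≤ −γ(t) ‖w‖² for all w ∈ H and t ≥ 0; ‖F(t, w)‖ ≤ c₀ ‖w‖^{1+p} for all w ∈ H and t ≥ 0, where c₀ > 0 and p > 0; and γ(t) = b₁ (b₀ + t)^{−d} with b₀, b₁ > 0 and d ∈ (0, 1). Suppose μ₀ > 0 satisfies μ₀ ‖u(0)‖ < 1, 2 c₀ μ₀^{−p} ≤ b₁ b₀^{−d}, and 2d < p b₁ b₀^{1−d}. Then ‖u(t)‖ < μ₀^{−1} exp(−(b₁ / (2(1 − d))) [(b₀ + t)^{1−d} − b₀^{1−d}]) for all t ≥ 0; in particular, ‖u(t)‖ → 0 as t → ∞. -/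
open Filter Real Set

section Aux

lemma aux_hasDerivAt_G (b₀ b₁ d : ℝ) (hd : d ≠ 1) {t : ℝ} (ht : 0 < b₀ + t) :
    HasDerivAt (fun s => b₁ / (2 * (1 - d)) * ((b₀ + s) ^ (1 - d) - b₀ ^ (1 - d)))
      (b₁ / 2 * (b₀ + t) ^ (-d)) t := by
  have h1d : (1:ℝ) - d ≠ 0 := sub_ne_zero.2 (Ne.symm hd)
  have h0 : HasDerivAt (fun s : ℝ => b₀ + s) 1 t := by
    simpa using (hasDerivAt_id t).const_add b₀
  have h2 := (Real.hasDerivAt_rpow_const (p := 1 - d) (Or.inl ht.ne')).comp t h0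
  have h3 := (h2.sub_const ((b₀ : ℝ) ^ (1 - d))).const_mul (b₁ / (2 * (1 - d)))
  have he : (1 : ℝ) - d - 1 = -d := by ring
  rw [he] at h3
  refine h3.congr_deriv ?_
  field_simp

lemma aux_chi (b₀ b₁ d p : ℝ) (hb₀ : 0 < b₀) (hd₁ : d < 1)
    (hp : 0 < p) (hb₁ : 0 < b₁)
    (hpar₂ : 2 * d ≤ p * b₁ * b₀ ^ (1 - d)) :
    ∀ t, 0 ≤ t → d * (Real.log (b₀ + t) - Real.log b₀) ≤
      p * (b₁ / (2 * (1 - d)) * ((b₀ + t) ^ (1 - d) - b₀ ^ (1 - d))) := by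
  set χ : ℝ → ℝ := fun s =>
    p * (b₁ / (2 * (1 - d)) * ((b₀ + s) ^ (1 - d) - b₀ ^ (1 - d))) -
      d * (Real.log (b₀ + s) - Real.log b₀) with hχ
  have hχd : ∀ s, 0 ≤ s →
      HasDerivAt χ (p * (b₁ / 2 * (b₀ + s) ^ (-d)) - d * (b₀ + s)⁻¹) s := by
    intro s hs
    have hpos : 0 < b₀ + s := by linarith
    have h1 := (aux_hasDerivAt_G b₀ b₁ d hd₁.ne hpos).const_mul p
    have h0 : HasDerivAt (fun x : ℝ => b₀ + x) 1 s := by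
      simpa using (hasDerivAt_id s).const_add b₀
    have h2 : HasDerivAt (fun x : ℝ => Real.log (b₀ + x)) (b₀ + s)⁻¹ s := by
      have h3 := (Real.hasDerivAt_log hpos.ne').comp s h0
      rw [mul_one] at h3
      exact h3
    exact h1.sub ((h2.sub_const (Real.log b₀)).const_mul d)
  have hmono : MonotoneOn χ (Ici 0) := by
    apply monotoneOn_of_deriv_nonneg (convex_Ici 0)
    · exact fun s hs => ((hχd s hs).continuousAt).continuousWithinAt
    · rw [interior_Ici]
      exact fun s hs => ((hχd s (le_of_lt hs)).differentiableAt).differentiableWithinAt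
    · intro s hs
      rw [interior_Ici] at hs
      rw [(hχd s hs.le).deriv]
      have hpos : 0 < b₀ + s := by linarith [(mem_Ioi.1 hs).le]
      have key : (b₀ + s) ^ (-d) * (b₀ + s) = (b₀ + s) ^ (1 - d) := by
        rw [← Real.rpow_add_one hpos.ne' (-d)]
        congr 1
        ring
      have hmono2 : b₀ ^ (1 - d) ≤ (b₀ + s) ^ (1 - d) :=
        Real.rpow_le_rpow hb₀.le (by linarith [(mem_Ioi.1 hs).le]) (by linarith)
      have h2d : 2 * d ≤ p * b₁ * (b₀ + s) ^ (1 - d) := by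
        nlinarith [mul_le_mul_of_nonneg_left hmono2 (by positivity : (0:ℝ) ≤ p * b₁)]
      rw [sub_nonneg]
      rw [show d * (b₀ + s)⁻¹ = d / (b₀ + s) by ring, div_le_iff₀ hpos,
        show p * (b₁ / 2 * (b₀ + s) ^ (-d)) * (b₀ + s)
          = p * b₁ / 2 * ((b₀ + s) ^ (-d) * (b₀ + s)) by ring, key]
      linarith
  intro t ht
  have h := hmono (self_mem_Ici) (mem_Ici.2 ht) ht
  have h0 : χ 0 = 0 := by simp [hχ]
  rw [h0] at h
  simp only [hχ] at h
  linarith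

lemma aux_gamma (b₀ b₁ d p : ℝ) (hb₀ : 0 < b₀) (hd₁ : d < 1)
    (hp : 0 < p) (hb₁ : 0 < b₁)
    (hpar₂ : 2 * d ≤ p * b₁ * b₀ ^ (1 - d)) :
    ∀ t, 0 ≤ t →
      b₀ ^ (-d) * Real.exp (-(p * (b₁ / (2 * (1 - d)) * ((b₀ + t) ^ (1 - d) - b₀ ^ (1 - d)))))
        ≤ (b₀ + t) ^ (-d) := by
  intro t ht
  have hpos : 0 < b₀ + t := by linarith
  rw [Real.rpow_def_of_pos hb₀ (-d), Real.rpow_def_of_pos hpos (-d),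
    ← Real.exp_add, Real.exp_le_exp]
  have := aux_chi b₀ b₁ d p hb₀ hd₁ hp hb₁ hpar₂ t ht
  nlinarith

end Aux

/-- Stability estimate for `u̇ = A(t)u + F(t,u)` with `γ(t) = b₁ (b₀ + t)^{−d}`, `d ∈ (0,1)`:
if `Re⟨A(t)w, w⟩ ≤ −γ(t)‖w‖²`, `‖F(t,w)‖ ≤ c₀‖w‖^{1+p}`, and `μ₀ > 0` satisfies
`μ₀‖u(0)‖ < 1`, `2c₀μ₀^{−p} ≤ b₁ b₀^{−d}` and `2d < p b₁ b₀^{1−d}`, then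
`‖u(t)‖ < μ₀⁻¹ exp(−(b₁/(2(1−d)))[(b₀+t)^{1−d} − b₀^{1−d}])` for all `t ≥ 0`;
in particular `‖u(t)‖ → 0` as `t → ∞`. -/
theorem asymptotic_stability_power_decay
    {H : Type*} [NormedAddCommGroup H] [InnerProductSpace ℂ H] [CompleteSpace H]
    (A : ℝ → H →L[ℂ] H) (F : ℝ → H → H) (u : ℝ → H)
    (b₀ b₁ d c₀ p μ₀ : ℝ)
    (hb₀ : 0 < b₀) (hb₁ : 0 < b₁) (hd₀ : 0 < d) (hd₁ : d < 1)
    (hc₀ : 0 < c₀) (hp : 0 < p) (hμ₀ : 0 < μ₀)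
    -- `u` is a strong solution of `u̇ = A(t)u + F(t, u)`
    (hu : ∀ t ≥ (0:ℝ), HasDerivAt u (A t (u t) + F t (u t)) t)
    -- dissipativity: `Re⟨A(t)w, w⟩ ≤ −γ(t)‖w‖²` with `γ(t) = b₁(b₀+t)^{−d}`
    (hA : ∀ t ≥ (0:ℝ), ∀ w : H,
      (inner ℂ (A t w) w : ℂ).re ≤ -(b₁ * (b₀ + t) ^ (-d)) * ‖w‖ ^ 2)
    -- the nonlinearity estimate
    (hF : ∀ t ≥ (0:ℝ), ∀ w : H, ‖F t w‖ ≤ c₀ * ‖w‖ ^ (1 + p))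
    -- smallness and parameter conditions
    (hsmall : μ₀ * ‖u 0‖ < 1)
    (hpar₁ : 2 * c₀ * μ₀ ^ (-p) ≤ b₁ * b₀ ^ (-d))
    (hpar₂ : 2 * d < p * b₁ * b₀ ^ (1 - d)) :
    (∀ t ≥ (0:ℝ), ‖u t‖ < μ₀⁻¹ *
      Real.exp (-(b₁ / (2 * (1 - d))) * ((b₀ + t) ^ (1 - d) - b₀ ^ (1 - d)))) ∧
    Tendsto (fun t => ‖u t‖) atTop (nhds 0) := by
  letI : InnerProductSpace ℝ H := InnerProductSpace.complexToReal
  have h1d : (0:ℝ) < 1 - d := by linarith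
  set G : ℝ → ℝ := fun s => b₁ / (2 * (1 - d)) * ((b₀ + s) ^ (1 - d) - b₀ ^ (1 - d)) with hGdef
  set M : ℝ → ℝ := fun s => μ₀⁻¹ *
      Real.exp (-(b₁ / (2 * (1 - d))) * ((b₀ + s) ^ (1 - d) - b₀ ^ (1 - d))) with hMdef
  have hMG : ∀ s, M s = μ₀⁻¹ * Real.exp (-G s) := by
    intro s; simp only [hMdef, hGdef, neg_mul]
  have hMpos : ∀ s, 0 < M s := fun s => by
    rw [hMG]; positivity
  -- real inner product vs complex
  have hre : ∀ x y : H, (inner ℝ x y : ℝ) = (inner ℂ y x : ℂ).re := by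
    intro x y
    rw [real_inner_eq_re_inner ℂ x y, inner_re_symm]
    rfl
  -- G derivative and continuity of M
  have hGd : ∀ s : ℝ, 0 ≤ s → HasDerivAt G (b₁ / 2 * (b₀ + s) ^ (-d)) s := by
    intro s hs
    exact aux_hasDerivAt_G b₀ b₁ d hd₁.ne (by linarith)
  have hMcont : ∀ s : ℝ, 0 ≤ s → ContinuousAt M s := by
    intro s hs
    have : M = fun r => μ₀⁻¹ * Real.exp (-G r) := funext hMG
    rw [this]
    exact continuousAt_const.mul
      (Real.continuous_exp.continuousAt.comp ((hGd s hs).continuousAt.neg))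
  -- ‖u 0‖ < M 0
  have hM00 : M 0 = μ₀⁻¹ := by
    simp [hMG, hGdef]
  have hM0 : ‖u 0‖ < M 0 := by
    rw [hM00]
    have h2 : μ₀ * ‖u 0‖ < μ₀ * μ₀⁻¹ := by
      rw [mul_inv_cancel₀ hμ₀.ne']; exact hsmall
    exact lt_of_mul_lt_mul_left h2 hμ₀.le
  -- Main claim
  have main : ∀ t, 0 ≤ t → ‖u t‖ < M t := by
    by_contra hcon
    push_neg at hcon
    obtain ⟨t₁, ht₁, ht₁M⟩ := hcon
    set S : Set ℝ := {t | 0 ≤ t ∧ M t ≤ ‖u t‖} with hSdef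
    have hSne : S.Nonempty := ⟨t₁, ht₁, ht₁M⟩
    have hSbdd : BddBelow S := ⟨0, fun s hs => hs.1⟩
    have hScl : IsClosed S := by
      rw [← isSeqClosed_iff_isClosed]
      intro x a hx hlim
      have ha : (0:ℝ) ≤ a := ge_of_tendsto hlim (Eventually.of_forall fun n => (hx n).1)
      have hcont : ContinuousAt (fun r => ‖u r‖ - M r) a :=
        ((hu a ha).continuousAt.norm.sub (hMcont a ha))
      have h0 : 0 ≤ ‖u a‖ - M a :=
        ge_of_tendsto (hcont.tendsto.comp hlim)
          (Eventually.of_forall fun n => sub_nonneg.2 (hx n).2)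
      exact ⟨ha, by linarith⟩
    set t₀ : ℝ := sInf S with ht₀def
    have htS : t₀ ∈ S := hScl.csInf_mem hSne hSbdd
    have ht0 : 0 ≤ t₀ := htS.1
    have htM : M t₀ ≤ ‖u t₀‖ := htS.2
    have hlt : ∀ s, 0 ≤ s → s < t₀ → ‖u s‖ < M s := by
      intro s hs hst
      by_contra h
      push_neg at h
      exact absurd (csInf_le hSbdd ⟨hs, h⟩) (not_le.2 hst)
    -- the auxiliary function w
    set w : ℝ → ℝ := fun s => ‖u s‖ ^ 2 * Real.exp (2 * G s) with hwdef
    have hwcont : ∀ s : ℝ, 0 ≤ s → ContinuousAt w s := by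
      intro s hs
      exact (((hu s hs).continuousAt.norm.pow 2).mul
        (Real.continuous_exp.continuousAt.comp ((hGd s hs).continuousAt.const_mul 2)))
    have hwderiv : ∀ s : ℝ, 0 ≤ s → HasDerivAt w
        (2 * (inner ℝ (u s) (A s (u s) + F s (u s)) : ℝ) * Real.exp (2 * G s)
          + ‖u s‖ ^ 2 * (Real.exp (2 * G s) * (2 * (b₁ / 2 * (b₀ + s) ^ (-d))))) s := by
      intro s hs
      exact ((hu s hs).norm_sq).mul (((hGd s hs).const_mul 2).exp)
    -- derivative bound: deriv w ≤ 0 on (0, t₀)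
    have hderiv_le : ∀ s, s ∈ Ioo 0 t₀ → deriv w s ≤ 0 := by
      intro s hs
      have hs0 : (0:ℝ) ≤ s := hs.1.le
      have hpos : 0 < b₀ + s := by linarith
      rw [(hwderiv s hs0).deriv]
      set n := ‖u s‖ with hn
      have hn0 : 0 ≤ n := norm_nonneg _
      have hus : n ≤ M s := (hlt s hs0 hs.2).le
      have hIA : (inner ℝ (u s) (A s (u s)) : ℝ) ≤ -(b₁ * (b₀ + s) ^ (-d)) * n ^ 2 := by
        rw [hre]
        exact hA s hs0 (u s)
      have hIF : (inner ℝ (u s) (F s (u s)) : ℝ) ≤ n * (c₀ * n ^ (1 + p)) := by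
        refine le_trans (real_inner_le_norm _ _) ?_
        exact mul_le_mul_of_nonneg_left (hF s hs0 (u s)) hn0
      -- 2 c₀ n^p ≤ γ
      have hrp : n ^ p ≤ (M s) ^ p := Real.rpow_le_rpow hn0 hus hp.le
      have hMsp : (M s) ^ p = μ₀ ^ (-p) * Real.exp (-(p * G s)) := by
        rw [hMG, Real.mul_rpow (by positivity) (Real.exp_pos _).le,
          ← Real.exp_mul, Real.inv_rpow hμ₀.le, ← Real.rpow_neg hμ₀.le]
        ring_nf
      have hγ : 2 * c₀ * n ^ p ≤ b₁ * (b₀ + s) ^ (-d) := by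
        have h1 : 2 * c₀ * n ^ p ≤ 2 * c₀ * μ₀ ^ (-p) * Real.exp (-(p * G s)) := by
          have := mul_le_mul_of_nonneg_left hrp (by positivity : (0:ℝ) ≤ 2 * c₀)
          rw [hMsp] at this
          linarith [this]
        have h2 : 2 * c₀ * μ₀ ^ (-p) * Real.exp (-(p * G s))
            ≤ b₁ * b₀ ^ (-d) * Real.exp (-(p * G s)) :=
          mul_le_mul_of_nonneg_right hpar₁ (Real.exp_pos _).le
        have h3 : b₁ * (b₀ ^ (-d) * Real.exp (-(p * G s))) ≤ b₁ * (b₀ + s) ^ (-d) :=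
          mul_le_mul_of_nonneg_left
            (aux_gamma b₀ b₁ d p hb₀ hd₁ hp hb₁ hpar₂.le s hs0) hb₁.le
        calc 2 * c₀ * n ^ p ≤ 2 * c₀ * μ₀ ^ (-p) * Real.exp (-(p * G s)) := h1
          _ ≤ b₁ * b₀ ^ (-d) * Real.exp (-(p * G s)) := h2
          _ = b₁ * (b₀ ^ (-d) * Real.exp (-(p * G s))) := by ring
          _ ≤ b₁ * (b₀ + s) ^ (-d) := h3
      have hpow : n ^ (1 + p) * n = n ^ p * n ^ 2 := by
        rw [Real.rpow_add' hn0 (by positivity)]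
        rw [Real.rpow_one]
        ring
      have hinadd : (inner ℝ (u s) (A s (u s) + F s (u s)) : ℝ)
          = (inner ℝ (u s) (A s (u s)) : ℝ) + (inner ℝ (u s) (F s (u s)) : ℝ) :=
        inner_add_right _ _ _
      set γ := b₁ * (b₀ + s) ^ (-d) with hγdef
      set E := Real.exp (2 * G s) with hEdef
      have hE : 0 < E := Real.exp_pos _
      have hfact : 2 * (inner ℝ (u s) (A s (u s) + F s (u s)) : ℝ) * E
            + n ^ 2 * (E * (2 * (b₁ / 2 * (b₀ + s) ^ (-d))))
          = E * (2 * (inner ℝ (u s) (A s (u s)) : ℝ)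
            + 2 * (inner ℝ (u s) (F s (u s)) : ℝ) + γ * n ^ 2) := by
        rw [hinadd]; ring
      rw [hfact]
      have hbr : 2 * (inner ℝ (u s) (A s (u s)) : ℝ)
          + 2 * (inner ℝ (u s) (F s (u s)) : ℝ) + γ * n ^ 2
          ≤ n ^ 2 * (2 * c₀ * n ^ p - γ) := by nlinarith [hIA, hIF, hpow]
      have hbr2 : n ^ 2 * (2 * c₀ * n ^ p - γ) ≤ 0 :=
        mul_nonpos_of_nonneg_of_nonpos (by positivity) (by linarith)
      exact mul_nonpos_of_nonneg_of_nonpos hE.le (by linarith) |>.trans_eq rfl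
    -- antitone
    have hanti : AntitoneOn w (Icc 0 t₀) := by
      apply antitoneOn_of_deriv_nonpos (convex_Icc 0 t₀)
      · exact fun s hs => (hwcont s hs.1).continuousWithinAt
      · rw [interior_Icc]
        exact fun s hs =>
          ((hwderiv s hs.1.le).differentiableAt).differentiableWithinAt
      · rw [interior_Icc]
        exact hderiv_le
    have hw0 : w 0 < μ₀⁻¹ ^ 2 := by
      have hG0 : G 0 = 0 := by simp [hGdef]
      have : w 0 = ‖u 0‖ ^ 2 := by simp [hwdef, hG0]
      rw [this]
      have := hM0
      rw [hM00] at this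
      exact pow_lt_pow_left₀ this (norm_nonneg _) two_ne_zero
    have hwt : w t₀ ≤ w 0 := hanti (left_mem_Icc.2 ht0) ⟨ht0, le_refl _⟩ ht0
    have hlb : μ₀⁻¹ ^ 2 ≤ w t₀ := by
      have h1 : (M t₀) ^ 2 ≤ ‖u t₀‖ ^ 2 := pow_le_pow_left₀ (hMpos t₀).le htM 2
      have h2 : (M t₀) ^ 2 * Real.exp (2 * G t₀) = μ₀⁻¹ ^ 2 := by
        rw [hMG, mul_pow, sq (Real.exp (-G t₀)), ← Real.exp_add, mul_assoc,
          ← Real.exp_add, show -G t₀ + -G t₀ + 2 * G t₀ = 0 by ring,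
          Real.exp_zero, mul_one]
      calc μ₀⁻¹ ^ 2 = (M t₀) ^ 2 * Real.exp (2 * G t₀) := h2.symm
        _ ≤ ‖u t₀‖ ^ 2 * Real.exp (2 * G t₀) :=
            mul_le_mul_of_nonneg_right h1 (Real.exp_pos _).le
        _ = w t₀ := rfl
    linarith
  refine ⟨fun t ht => main t ht, ?_⟩
  -- tendsto
  have hMtend : Tendsto M atTop (nhds 0) := by
    have h1 : Tendsto (fun t : ℝ => b₀ + t) atTop atTop :=
      tendsto_atTop_add_const_left _ b₀ tendsto_id
    have h2 : Tendsto (fun t : ℝ => (b₀ + t) ^ (1 - d)) atTop atTop :=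
      (tendsto_rpow_atTop h1d).comp h1
    have h3 : Tendsto (fun t : ℝ => (b₀ + t) ^ (1 - d) - b₀ ^ (1 - d)) atTop atTop :=
      tendsto_atTop_add_const_right _ (-(b₀ ^ (1 - d))) h2
    have h4 : Tendsto (fun t : ℝ => b₁ / (2 * (1 - d)) *
        ((b₀ + t) ^ (1 - d) - b₀ ^ (1 - d))) atTop atTop :=
      h3.const_mul_atTop (by positivity)
    have h5 : Tendsto (fun t : ℝ => -(b₁ / (2 * (1 - d)) *
        ((b₀ + t) ^ (1 - d) - b₀ ^ (1 - d)))) atTop atBot := by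
      exact tendsto_neg_atTop_atBot.comp h4
    have h6 : Tendsto (fun t : ℝ => Real.exp (-(b₁ / (2 * (1 - d)) *
        ((b₀ + t) ^ (1 - d) - b₀ ^ (1 - d))))) atTop (nhds 0) :=
      Real.tendsto_exp_atBot.comp h5
    have h7 := h6.const_mul μ₀⁻¹
    rw [mul_zero] at h7
    have : M = fun t => μ₀⁻¹ * Real.exp (-(b₁ / (2 * (1 - d)) *
        ((b₀ + t) ^ (1 - d) - b₀ ^ (1 - d)))) := by
      funext s; rw [hMG]
    rw [this]
    exact h7
  apply squeeze_zero' (Eventually.of_forall fun t => norm_nonneg _) ?_ hMtend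
  filter_upwards [eventually_ge_atTop (0:ℝ)] with t ht
  exact (main t ht).le
end

section
/- Let H be a complex Hilbert space, let A : [0, ∞) → B(H) assign to each t a bounded linear operator on H, let F : [0, ∞) × H → H, and let u : [0, ∞) → H be differentiable with u̇(t) = A(t) u(t) + F(t, u(t)) for all t ≥ 0. Assume: Re⟨A(t) w, w⟩ ≤ −γ(t) ‖w‖² for all w ∈ H and t ≥ 0; ‖F(t, w)‖ ≤ c₀ ‖w‖^{1+p} for all w ∈ H and t ≥ 0, where c₀ > 0 and p > 0; and γ(t) = b₁ (b₀ + t)^{−1} with b₀, b₁ > 0. Suppose b₁ p > 2 and μ₀ > 0 satisfies μ₀ ‖u(0)‖ < 1 and 2 c₀ μ₀^{−p} ≤ b₁ / b₀. Then ‖u(t)‖ < μ₀^{−1} (b₀ / (b₀ + t))^{b₁ / 2} for all t ≥ 0; in particular, ‖u(t)‖ → 0 as t → ∞. -/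
open Filter Set

/-- Stability estimate for `u̇ = A(t)u + F(t,u)` with `γ(t) = b₁ (b₀ + t)⁻¹` (the case
`d = 1`): if `Re⟨A(t)w, w⟩ ≤ −γ(t)‖w‖²`, `‖F(t,w)‖ ≤ c₀‖w‖^{1+p}`, `b₁ p > 2`, and
`μ₀ > 0` satisfies `μ₀‖u(0)‖ < 1` and `2c₀μ₀^{−p} ≤ b₁/b₀`, then
`‖u(t)‖ < μ₀⁻¹ (b₀/(b₀+t))^{b₁/2}` for all `t ≥ 0`;
in particular `‖u(t)‖ → 0` as `t → ∞`. -/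
theorem asymptotic_stability_critical_decay
    {H : Type*} [NormedAddCommGroup H] [InnerProductSpace ℂ H] [CompleteSpace H]
    (A : ℝ → H →L[ℂ] H) (F : ℝ → H → H) (u : ℝ → H)
    (b₀ b₁ c₀ p μ₀ : ℝ)
    (hb₀ : 0 < b₀) (hb₁ : 0 < b₁) (hc₀ : 0 < c₀) (hp : 0 < p) (hμ₀ : 0 < μ₀)
    -- `u` is a strong solution of `u̇ = A(t)u + F(t, u)`
    (hu : ∀ t ≥ (0:ℝ), HasDerivAt u (A t (u t) + F t (u t)) t)
    -- dissipativity: `Re⟨A(t)w, w⟩ ≤ −γ(t)‖w‖²` with `γ(t) = b₁(b₀+t)⁻¹`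
    (hA : ∀ t ≥ (0:ℝ), ∀ w : H,
      (inner ℂ (A t w) w : ℂ).re ≤ -(b₁ * (b₀ + t)⁻¹) * ‖w‖ ^ 2)
    -- the nonlinearity estimate
    (hF : ∀ t ≥ (0:ℝ), ∀ w : H, ‖F t w‖ ≤ c₀ * ‖w‖ ^ (1 + p))
    -- smallness and parameter conditions
    (hbp : 2 < b₁ * p)
    (hsmall : μ₀ * ‖u 0‖ < 1)
    (hpar : 2 * c₀ * μ₀ ^ (-p) ≤ b₁ / b₀) :
    (∀ t ≥ (0:ℝ), ‖u t‖ < μ₀⁻¹ * (b₀ / (b₀ + t)) ^ (b₁ / 2)) ∧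
    Tendsto (fun t => ‖u t‖) atTop (nhds 0) := by
  letI : InnerProductSpace ℝ H := InnerProductSpace.complexToReal
  set c : ℝ := (1 + (μ₀ * ‖u 0‖) ^ 2) / 2 with hc_def
  have hu0 : 0 ≤ μ₀ * ‖u 0‖ := by positivity
  have hsq : (μ₀ * ‖u 0‖) ^ 2 < 1 := by nlinarith
  have hc1 : c < 1 := by rw [hc_def]; linarith
  have hc0 : 0 < c := by rw [hc_def]; positivity
  have hcge : (μ₀ * ‖u 0‖) ^ 2 ≤ c := by rw [hc_def]; nlinarith
  set K : ℝ := c * μ₀ ^ (-(2:ℝ)) * b₀ ^ b₁ with hK_def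
  have hK0 : 0 < K := by rw [hK_def]; positivity
  set B : ℝ → ℝ := fun t => K * (b₀ + t) ^ (-b₁) with hB_def
  set B' : ℝ → ℝ := fun t => K * (1 * -b₁ * (b₀ + t) ^ (-b₁ - 1)) with hB'_def
  set f : ℝ → ℝ := fun t => ‖u t‖ ^ 2 with hf_def
  set f' : ℝ → ℝ := fun t =>
    2 * (inner ℝ (u t) (A t (u t) + F t (u t)) : ℝ) with hf'_def
  have hμ2 : μ₀ ^ (-(2:ℝ)) = (μ₀ ^ 2)⁻¹ := by
    rw [Real.rpow_neg hμ₀.le, ← Real.rpow_natCast μ₀ 2]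
    norm_num
  -- the key comparison estimate on `[0, T]`
  have key : ∀ T ≥ (0:ℝ), f T ≤ B T := by
    intro T hT
    have hcont_f : ContinuousOn f (Icc 0 T) := by
      intro x hx
      exact ((hu x hx.1).norm_sq.continuousAt).continuousWithinAt
    have hf'x : ∀ x ∈ Ico (0:ℝ) T, HasDerivWithinAt f (f' x) (Ici x) x := by
      intro x hx
      exact ((hu x hx.1).norm_sq).hasDerivWithinAt
    have hBx : ∀ x ∈ Icc (0:ℝ) T, HasDerivAt B (B' x) x := by
      intro x hx
      have hs : (0:ℝ) < b₀ + x := by linarith [hx.1]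
      have h1 : HasDerivAt (fun t : ℝ => b₀ + t) 1 x := (hasDerivAt_id x).const_add b₀
      exact (h1.rpow_const (Or.inl hs.ne')).const_mul K
    have hB'x : ∀ x ∈ Ico (0:ℝ) T, HasDerivWithinAt B (B' x) (Ici x) x := fun x hx =>
      (hBx x (Ico_subset_Icc_self hx)).hasDerivWithinAt
    have hcont_B : ContinuousOn B (Icc 0 T) := fun x hx =>
      (hBx x hx).continuousAt.continuousWithinAt
    have ha : f 0 ≤ B 0 := by
      have hb : B 0 = c * (μ₀ ^ 2)⁻¹ := by
        show K * (b₀ + 0) ^ (-b₁) = c * (μ₀ ^ 2)⁻¹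
        rw [hK_def, hμ2, add_zero, Real.rpow_neg hb₀.le]
        have hbne : b₀ ^ b₁ ≠ 0 := (Real.rpow_pos_of_pos hb₀ b₁).ne'
        field_simp
      have hμ2pos : (0:ℝ) < μ₀ ^ 2 := by positivity
      show ‖u 0‖ ^ 2 ≤ B 0
      rw [hb, ← div_eq_mul_inv, le_div_iff₀ hμ2pos]
      have hrng : (μ₀ * ‖u 0‖) ^ 2 = ‖u 0‖ ^ 2 * μ₀ ^ 2 := by ring
      linarith [hcge, hrng.le, hrng.ge]
    have bound : ∀ x ∈ Ico (0:ℝ) T, f x = B x → f' x < B' x := by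
      intro x hx hfB
      have hx0 : (0:ℝ) ≤ x := hx.1
      have hs : (0:ℝ) < b₀ + x := by linarith
      set n : ℝ := ‖u x‖ with hn_def
      have hfB' : n ^ 2 = B x := hfB
      have hnn : 0 ≤ n := norm_nonneg _
      have hBpos : 0 < B x := by
        show 0 < K * (b₀ + x) ^ (-b₁)
        positivity
      have hn2 : 0 < n ^ 2 := hfB' ▸ hBpos
      have hn : 0 < n := by nlinarith
      -- the inner product estimate
      have hAx := hA x hx0 (u x)
      have hFx := hF x hx0 (u x)
      have hinner : (inner ℝ (u x) (A x (u x) + F x (u x)) : ℝ)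
          ≤ -(b₁ * (b₀ + x)⁻¹) * n ^ 2 + c₀ * (n ^ 2 * n ^ p) := by
        rw [inner_add_right]
        have h1 : (inner ℝ (u x) (A x (u x)) : ℝ) = (inner ℂ (A x (u x)) (u x) : ℂ).re := by
          rw [real_inner_comm]; rfl
        have h2 : (inner ℝ (u x) (F x (u x)) : ℝ) ≤ c₀ * (n ^ 2 * n ^ p) := by
          have hr : n ^ (1 + p) = n * n ^ p := by
            rw [Real.rpow_add hn, Real.rpow_one]
          calc (inner ℝ (u x) (F x (u x)) : ℝ) ≤ ‖u x‖ * ‖F x (u x)‖ := real_inner_le_norm _ _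
            _ ≤ n * (c₀ * n ^ (1 + p)) := mul_le_mul_of_nonneg_left hFx hnn
            _ = c₀ * (n ^ 2 * n ^ p) := by rw [hr]; ring
        rw [h1]
        exact add_le_add hAx h2
      -- `n ^ p = (B x) ^ (p / 2)`
      have hnp : n ^ p = (B x) ^ (p / 2) := by
        have h1 : n ^ p = (n ^ (2:ℝ)) ^ (p / 2) := by
          rw [← Real.rpow_mul hnn, show (2:ℝ) * (p / 2) = p by ring]
        have h2 : n ^ (2:ℝ) = n ^ (2:ℕ) := by
          rw [← Real.rpow_natCast n 2]; norm_num
        rw [h1, h2, hfB']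
      -- the key scalar estimate
      have hkey : 2 * c₀ * n ^ p < b₁ * (b₀ + x)⁻¹ := by
        rw [hnp]
        have hD : B x < μ₀ ^ (-(2:ℝ)) * b₀ ^ b₁ * (b₀ + x) ^ (-b₁) := by
          show K * (b₀ + x) ^ (-b₁) < μ₀ ^ (-(2:ℝ)) * b₀ ^ b₁ * (b₀ + x) ^ (-b₁)
          rw [hK_def]
          have hpos : (0:ℝ) < μ₀ ^ (-(2:ℝ)) * b₀ ^ b₁ * (b₀ + x) ^ (-b₁) := by positivity
          have := mul_lt_mul_of_pos_right hc1 hpos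
          linarith
        have hBp : (B x) ^ (p / 2) < (μ₀ ^ (-(2:ℝ)) * b₀ ^ b₁ * (b₀ + x) ^ (-b₁)) ^ (p / 2) :=
          Real.rpow_lt_rpow hBpos.le hD (by positivity)
        have hDval : (μ₀ ^ (-(2:ℝ)) * b₀ ^ b₁ * (b₀ + x) ^ (-b₁)) ^ (p / 2)
            = μ₀ ^ (-p) * (b₀ / (b₀ + x)) ^ (b₁ * p / 2) := by
          have hq : b₀ ^ b₁ * (b₀ + x) ^ (-b₁) = (b₀ / (b₀ + x)) ^ b₁ := by
            rw [Real.div_rpow hb₀.le hs.le, Real.rpow_neg hs.le, div_eq_mul_inv]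
          rw [mul_assoc, hq, Real.mul_rpow (by positivity) (by positivity),
            ← Real.rpow_mul hμ₀.le, ← Real.rpow_mul (by positivity)]
          congr 1
          · congr 1; ring
          · congr 1; ring
        have hmono : (b₀ / (b₀ + x)) ^ (b₁ * p / 2) ≤ b₀ / (b₀ + x) := by
          have h1 : (0:ℝ) < b₀ / (b₀ + x) := by positivity
          have h2 : b₀ / (b₀ + x) ≤ 1 := by
            rw [div_le_one hs]; linarith
          have h3 : (1:ℝ) ≤ b₁ * p / 2 := by linarith
          calc (b₀ / (b₀ + x)) ^ (b₁ * p / 2) ≤ (b₀ / (b₀ + x)) ^ (1:ℝ) :=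
                Real.rpow_le_rpow_of_exponent_ge h1 h2 h3
            _ = b₀ / (b₀ + x) := Real.rpow_one _
        have hfin : 2 * c₀ * (μ₀ ^ (-p) * (b₀ / (b₀ + x)) ^ (b₁ * p / 2))
            ≤ b₁ * (b₀ + x)⁻¹ := by
          have h4 : 2 * c₀ * μ₀ ^ (-p) * (b₀ / (b₀ + x)) ^ (b₁ * p / 2)
              ≤ (b₁ / b₀) * (b₀ / (b₀ + x)) :=
            mul_le_mul hpar hmono (by positivity) (by positivity)
          have h5 : (b₁ / b₀) * (b₀ / (b₀ + x)) = b₁ * (b₀ + x)⁻¹ := by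
            field_simp
          rw [← mul_assoc]
          linarith [h4, h5.le]
        have hlt : 2 * c₀ * (B x) ^ (p / 2)
            < 2 * c₀ * (μ₀ ^ (-p) * (b₀ / (b₀ + x)) ^ (b₁ * p / 2)) := by
          rw [← hDval]
          exact mul_lt_mul_of_pos_left hBp (by positivity)
        linarith
      -- compute `B' x`
      have hB'val : B' x = -(b₁ * (b₀ + x)⁻¹) * n ^ 2 := by
        show K * (1 * -b₁ * (b₀ + x) ^ (-b₁ - 1)) = -(b₁ * (b₀ + x)⁻¹) * n ^ 2
        have hrw : (b₀ + x) ^ (-b₁ - 1) = (b₀ + x) ^ (-b₁) * (b₀ + x)⁻¹ := by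
          rw [show -b₁ - 1 = -b₁ + (-1) by ring, Real.rpow_add hs, Real.rpow_neg_one]
        have hBn : K * (b₀ + x) ^ (-b₁) = n ^ 2 := hfB'.symm
        calc K * (1 * -b₁ * (b₀ + x) ^ (-b₁ - 1))
            = -(b₁ * (b₀ + x)⁻¹) * (K * (b₀ + x) ^ (-b₁)) := by rw [hrw]; ring
          _ = -(b₁ * (b₀ + x)⁻¹) * n ^ 2 := by rw [hBn]
      have hfx : f' x = 2 * (inner ℝ (u x) (A x (u x) + F x (u x)) : ℝ) := rfl
      rw [hB'val, hfx]
      have hprod : 2 * c₀ * n ^ p * n ^ 2 < b₁ * (b₀ + x)⁻¹ * n ^ 2 :=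
        mul_lt_mul_of_pos_right hkey hn2
      linarith [hinner, hprod]
    have := image_le_of_deriv_right_lt_deriv_boundary' hcont_f hf'x ha hcont_B hB'x bound
    exact this (right_mem_Icc.2 hT)
  -- deduce the strict pointwise bound
  have main : ∀ t ≥ (0:ℝ), ‖u t‖ < μ₀⁻¹ * (b₀ / (b₀ + t)) ^ (b₁ / 2) := by
    intro t ht
    have hs : (0:ℝ) < b₀ + t := by linarith
    have hM : 0 < μ₀⁻¹ * (b₀ / (b₀ + t)) ^ (b₁ / 2) := by positivity
    apply lt_of_pow_lt_pow_left₀ 2 hM.le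
    have hsq2 : (μ₀⁻¹ * (b₀ / (b₀ + t)) ^ (b₁ / 2)) ^ 2
        = μ₀ ^ (-(2:ℝ)) * b₀ ^ b₁ * (b₀ + t) ^ (-b₁) := by
      rw [mul_pow, ← Real.rpow_natCast ((b₀ / (b₀ + t)) ^ (b₁ / 2)) 2,
        ← Real.rpow_mul (by positivity : (0:ℝ) ≤ b₀ / (b₀ + t))]
      rw [hμ2, inv_pow]
      rw [show b₁ / 2 * ((2:ℕ):ℝ) = b₁ by push_cast; ring]
      rw [Real.div_rpow hb₀.le hs.le, Real.rpow_neg hs.le, div_eq_mul_inv, mul_assoc]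
    rw [hsq2]
    have h1 : ‖u t‖ ^ 2 ≤ B t := key t ht
    have h2 : B t < μ₀ ^ (-(2:ℝ)) * b₀ ^ b₁ * (b₀ + t) ^ (-b₁) := by
      show K * (b₀ + t) ^ (-b₁) < μ₀ ^ (-(2:ℝ)) * b₀ ^ b₁ * (b₀ + t) ^ (-b₁)
      rw [hK_def]
      have hpos : (0:ℝ) < μ₀ ^ (-(2:ℝ)) * b₀ ^ b₁ * (b₀ + t) ^ (-b₁) := by positivity
      have := mul_lt_mul_of_pos_right hc1 hpos
      linarith
    linarith
  refine ⟨main, ?_⟩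
  -- the tendsto part
  have h0 : Tendsto (fun t : ℝ => b₀ / (b₀ + t)) atTop (nhds 0) :=
    Tendsto.div_atTop tendsto_const_nhds (tendsto_atTop_add_const_left _ _ tendsto_id)
  have h1 : Tendsto (fun t : ℝ => (b₀ / (b₀ + t)) ^ (b₁ / 2)) atTop (nhds 0) := by
    have hc : ContinuousAt (fun x : ℝ => x ^ (b₁ / 2)) 0 :=
      Real.continuousAt_rpow_const 0 (b₁ / 2) (Or.inr (by positivity))
    have := hc.tendsto.comp h0
    simpa [Real.zero_rpow (by positivity : (b₁ / 2) ≠ 0), Function.comp_def] using this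
  have h2 : Tendsto (fun t : ℝ => μ₀⁻¹ * (b₀ / (b₀ + t)) ^ (b₁ / 2)) atTop (nhds 0) := by
    have := h1.const_mul μ₀⁻¹
    simpa using this
  apply squeeze_zero' (Eventually.of_forall fun t => norm_nonneg _) _ h2
  filter_upwards [eventually_ge_atTop (0:ℝ)] with t ht
  exact (main t ht).le
end

section
/- Let H be a complex Hilbert space, let A be a bounded linear operator on H with Re⟨A w, w⟩ ≤ 0 for all w ∈ H, and let B : [0, ∞) → B(H) be continuous with ∫₀^∞ ‖B(t)‖ dt < ∞. Let v : [0, ∞) → H be differentiable with v̇(t) = A v(t) + B(t) v(t) for all t ≥ 0. Then the limit lim_{t → ∞} ‖v(t)‖ exists and is finite. -/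
open MeasureTheory Filter

/-- If `A` is a bounded operator on a complex Hilbert space with `Re⟨Aw, w⟩ ≤ 0`,
`B(t)` is continuous with `∫₀^∞ ‖B(t)‖ dt < ∞`, and `v` solves `v̇ = Av + B(t)v`,
then `lim_{t → ∞} ‖v(t)‖` exists and is finite. -/
theorem perturbed_linear_norm_limit_exists
    {H : Type*} [NormedAddCommGroup H] [InnerProductSpace ℂ H] [CompleteSpace H]
    (A : H →L[ℂ] H) (B : ℝ → H →L[ℂ] H) (v : ℝ → H)
    -- dissipativity of `A`
    (hA : ∀ w : H, (inner ℂ (A w) w : ℂ).re ≤ 0)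
    -- `B` is continuous with integrable operator norm on `[0, ∞)`
    (hB_cont : ContinuousOn B (Set.Ici 0))
    (hB_int : IntegrableOn (fun t => ‖B t‖) (Set.Ici 0))
    -- `v` is a strong solution of `v̇ = Av + B(t)v`
    (hv : ∀ t ≥ (0:ℝ), HasDerivAt v (A (v t) + B t (v t)) t) :
    ∃ V : ℝ, Tendsto (fun t => ‖v t‖) atTop (nhds V) := by
  -- extend `‖B ·‖` to a continuous function on all of `ℝ`
  set b : ℝ → ℝ := fun t => ‖B (max t 0)‖ with hb_def
  have hb_cont : Continuous b := by
    have hmax : Continuous fun t : ℝ => max t 0 := continuous_id.max continuous_const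
    have : Continuous fun t : ℝ => B (max t 0) :=
      hB_cont.comp_continuous hmax (fun t => Set.mem_Ici.mpr (le_max_right _ _))
    exact this.norm
  have hb_nonneg : ∀ t, 0 ≤ b t := fun t => norm_nonneg _
  have hb_eq : ∀ t ≥ (0:ℝ), b t = ‖B t‖ := fun t ht => by
    simp [hb_def, max_eq_left ht]
  -- the integral function
  set I : ℝ → ℝ := fun t => ∫ s in (0:ℝ)..t, b s with hI_def
  have hI_deriv : ∀ t, HasDerivAt I (b t) t := fun t =>
    (hb_cont.integral_hasStrictDerivAt 0 t).hasDerivAt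
  -- `I` tends to a finite limit
  have hb_int : IntegrableOn b (Set.Ioi 0) := by
    apply (hB_int.mono_set Set.Ioi_subset_Ici_self).congr_fun
    · intro t ht
      exact (hb_eq t (le_of_lt ht)).symm
    · exact measurableSet_Ioi
  obtain ⟨C, hC⟩ : ∃ C, Tendsto I atTop (nhds C) :=
    ⟨_, intervalIntegral_tendsto_integral_Ioi 0 hb_int tendsto_id⟩
  -- the auxiliary function `g`
  set g : ℝ → ℝ := fun t => ‖v t‖ ^ 2 * Real.exp (-(2 * I t)) with hg_def
  have hg_nonneg : ∀ t, 0 ≤ g t := fun t =>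
    mul_nonneg (sq_nonneg _) (Real.exp_pos _).le
  -- derivative of `‖v ·‖ ^ 2`
  have hsq : ∀ t ≥ (0:ℝ), HasDerivAt (fun t => ‖v t‖ ^ 2)
      ((inner ℂ (v t) (A (v t) + B t (v t)) + inner ℂ (A (v t) + B t (v t)) (v t) : ℂ).re) t := by
    intro t ht
    have h1 : HasDerivAt (fun t => (inner ℂ (v t) (v t) : ℂ))
        (inner ℂ (v t) (A (v t) + B t (v t)) + inner ℂ (A (v t) + B t (v t)) (v t)) t :=
      (hv t ht).inner ℂ (hv t ht)
    have h2 := (Complex.reCLM.hasFDerivAt.comp_hasDerivAt t h1)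
    have h3 : (⇑Complex.reCLM ∘ fun t => (inner ℂ (v t) (v t) : ℂ)) = fun t => ‖v t‖ ^ 2 := by
      funext s
      simpa using inner_self_eq_norm_sq (𝕜 := ℂ) (v s)
    rw [h3] at h2
    exact h2
  -- derivative of `g`
  have hg_deriv : ∀ t ≥ (0:ℝ), HasDerivAt g
      (((inner ℂ (v t) (A (v t) + B t (v t)) + inner ℂ (A (v t) + B t (v t)) (v t) : ℂ).re)
        * Real.exp (-(2 * I t)) + ‖v t‖ ^ 2 * (Real.exp (-(2 * I t)) * -(2 * b t))) t := by
    intro t ht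
    have hexp : HasDerivAt (fun t => Real.exp (-(2 * I t)))
        (Real.exp (-(2 * I t)) * -(2 * b t)) t := by
      have h1 : HasDerivAt (fun t => -(2 * I t)) (-(2 * b t)) t :=
        (((hI_deriv t).const_mul 2).neg)
      exact (Real.hasDerivAt_exp _).comp t h1
    exact (hsq t ht).mul hexp
  -- the derivative of `g` is nonpositive on `[0, ∞)`
  have hg_deriv_nonpos : ∀ t ≥ (0:ℝ),
      ((inner ℂ (v t) (A (v t) + B t (v t)) + inner ℂ (A (v t) + B t (v t)) (v t) : ℂ).re)
        * Real.exp (-(2 * I t)) + ‖v t‖ ^ 2 * (Real.exp (-(2 * I t)) * -(2 * b t)) ≤ 0 := by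
    intro t ht
    have key : ((inner ℂ (v t) (A (v t) + B t (v t)) + inner ℂ (A (v t) + B t (v t)) (v t) : ℂ).re)
        ≤ 2 * b t * ‖v t‖ ^ 2 := by
      have hsymm : (inner ℂ (v t) (A (v t) + B t (v t)) : ℂ).re
          = (inner ℂ (A (v t) + B t (v t)) (v t) : ℂ).re := by
        exact inner_re_symm (𝕜 := ℂ) _ _
      have hBb : (inner ℂ (B t (v t)) (v t) : ℂ).re ≤ b t * ‖v t‖ ^ 2 := by
        calc (inner ℂ (B t (v t)) (v t) : ℂ).re ≤ ‖B t (v t)‖ * ‖v t‖ :=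
              re_inner_le_norm (𝕜 := ℂ) _ _
          _ ≤ (‖B t‖ * ‖v t‖) * ‖v t‖ :=
              mul_le_mul_of_nonneg_right ((B t).le_opNorm _) (norm_nonneg _)
          _ = b t * ‖v t‖ ^ 2 := by rw [hb_eq t ht]; ring
      have hAB : (inner ℂ (A (v t) + B t (v t)) (v t) : ℂ).re ≤ b t * ‖v t‖ ^ 2 := by
        rw [inner_add_left]
        have := hA (v t)
        calc ((inner ℂ (A (v t)) (v t) : ℂ) + (inner ℂ (B t (v t)) (v t) : ℂ)).re
            = (inner ℂ (A (v t)) (v t) : ℂ).re + (inner ℂ (B t (v t)) (v t) : ℂ).re := by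
              simp [Complex.add_re]
          _ ≤ 0 + b t * ‖v t‖ ^ 2 := add_le_add this hBb
          _ = b t * ‖v t‖ ^ 2 := by ring
      calc ((inner ℂ (v t) (A (v t) + B t (v t)) : ℂ)
            + (inner ℂ (A (v t) + B t (v t)) (v t) : ℂ)).re
          = (inner ℂ (v t) (A (v t) + B t (v t)) : ℂ).re
            + (inner ℂ (A (v t) + B t (v t)) (v t) : ℂ).re := by simp [Complex.add_re]
        _ = 2 * (inner ℂ (A (v t) + B t (v t)) (v t) : ℂ).re := by rw [hsymm]; ring
        _ ≤ 2 * (b t * ‖v t‖ ^ 2) := by linarith [hAB]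
        _ = 2 * b t * ‖v t‖ ^ 2 := by ring
    have hexp_pos : 0 < Real.exp (-(2 * I t)) := Real.exp_pos _
    have : ((inner ℂ (v t) (A (v t) + B t (v t)) + inner ℂ (A (v t) + B t (v t)) (v t) : ℂ).re)
          * Real.exp (-(2 * I t)) + ‖v t‖ ^ 2 * (Real.exp (-(2 * I t)) * -(2 * b t))
        = (((inner ℂ (v t) (A (v t) + B t (v t)) + inner ℂ (A (v t) + B t (v t)) (v t) : ℂ).re)
          - 2 * b t * ‖v t‖ ^ 2) * Real.exp (-(2 * I t)) := by ring
    rw [this]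
    exact mul_nonpos_of_nonpos_of_nonneg (by linarith) hexp_pos.le
  -- `g` is antitone on `[0, ∞)`
  have hg_anti : AntitoneOn g (Set.Ici 0) := by
    apply antitoneOn_of_deriv_nonpos (convex_Ici 0)
    · intro t ht
      exact ((hg_deriv t ht).continuousAt).continuousWithinAt
    · intro t ht
      rw [interior_Ici] at ht
      exact ((hg_deriv t ht.le).differentiableAt).differentiableWithinAt
    · intro t ht
      rw [interior_Ici] at ht
      rw [(hg_deriv t ht.le).deriv]
      exact hg_deriv_nonpos t ht.le
  -- `g` converges at infinity
  set G : ℝ → ℝ := fun t => g (max t 0) with hG_def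
  have hG_anti : Antitone G := by
    intro s t hst
    exact hg_anti (Set.mem_Ici.mpr (le_max_right _ _)) (Set.mem_Ici.mpr (le_max_right _ _)) (max_le_max hst le_rfl)
  have hG_bdd : BddBelow (Set.range G) := by
    refine ⟨0, ?_⟩
    rintro x ⟨t, rfl⟩
    exact hg_nonneg _
  obtain ⟨L, hL⟩ : ∃ L, Tendsto G atTop (nhds L) :=
    ⟨_, tendsto_atTop_ciInf hG_anti hG_bdd⟩
  have hgL : Tendsto g atTop (nhds L) := by
    apply hL.congr'
    filter_upwards [eventually_ge_atTop (0:ℝ)] with t ht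
    simp [hG_def, max_eq_left ht]
  -- `‖v t‖ ^ 2` converges
  have hsq_tendsto : Tendsto (fun t => ‖v t‖ ^ 2) atTop (nhds (L * Real.exp (2 * C))) := by
    have h1 : Tendsto (fun t => g t * Real.exp (2 * I t)) atTop
        (nhds (L * Real.exp (2 * C))) :=
      hgL.mul ((Real.continuous_exp.tendsto _).comp (hC.const_mul 2))
    apply h1.congr
    intro t
    simp only [hg_def]
    rw [mul_assoc, ← Real.exp_add]
    simp
  -- conclude via square root
  refine ⟨Real.sqrt (L * Real.exp (2 * C)), ?_⟩
  have h2 : Tendsto (fun t => Real.sqrt (‖v t‖ ^ 2)) atTop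
      (nhds (Real.sqrt (L * Real.exp (2 * C)))) :=
    (Real.continuous_sqrt.tendsto _).comp hsq_tendsto
  apply h2.congr
  intro t
  exact Real.sqrt_sq (norm_nonneg _)
end
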